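/- Let H be a linear hypergraph with no rank-1 edges such that q_list(H) > D(H) + 1 and q_list(H ∖ {e}) ≤ D(H) + 1 for every edge e. Then every edge e satisfies R(e) ≥ D(H). -/

import Mathlib

open Finset

variable {V : Type*} [DecidableEq V]

/-- A proper list edge coloring of the hypergraph with edge set `E` from the lists `L`:
each edge gets a color from its list, and two distinct edges get the same color
only if they are disjoint. -/
def IsProperListColoring (E : Finset (Finset V)) (L : Finset V → Finset ℕ)
    (γ : Finset V → ℕ) : Prop :=
  (∀ e ∈ E, γ e ∈ L e) ∧ ∀ e ∈ E, ∀ f ∈ E, e ≠ f → γ e = γ f → Disjoint e f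

/-- `E` is `k`-list-edge-colorable: for every assignment of lists of size `k`
there is a proper list edge coloring. -/
def ListColorable (E : Finset (Finset V)) (k : ℕ) : Prop :=
  ∀ L : Finset V → Finset ℕ, (∀ e ∈ E, (L e).card = k) →
    ∃ γ : Finset V → ℕ, IsProperListColoring E L γ

/-- The list edge chromatic number `q_list`: the least `k` such that `E` is
`k`-list-edge-colorable. -/
noncomputable def qList (E : Finset (Finset V)) : ℕ :=
  sInf {k | ListColorable E k}

/-- The degree of a vertex: the number of edges containing it. -/
def deg (E : Finset (Finset V)) (x : V) : ℕ := (E.filter fun e => x ∈ e).card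

/-- The clique rank of an edge: `R(e) = ∑_{x ∈ e} (d(x) - 1)`. -/
def cliqueRank (E : Finset (Finset V)) (e : Finset V) : ℕ :=
  ∑ x ∈ e, (deg E x - 1)

/-- The clique degree of a vertex: `D(x) = ∑_{e ∋ x} (r(e) - 1)`. -/
def cliqueDeg (E : Finset (Finset V)) (x : V) : ℕ :=
  ∑ e ∈ E.filter (fun e => x ∈ e), (e.card - 1)

/-- A hypergraph is linear if any two distinct edges meet in at most one vertex. -/
def Linear (E : Finset (Finset V)) : Prop :=
  ∀ e ∈ E, ∀ f ∈ E, e ≠ f → (e ∩ f).card ≤ 1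

/-- The number of triangles with side `e`: unordered pairs `{f, g}` of edges
distinct from `e` such that `e, f, g` pairwise intersect. -/
def numTriangles (E : Finset (Finset V)) (e : Finset V) : ℕ :=
  (((E.erase e).powersetCard 2).filter fun p =>
    (∀ f ∈ p, (e ∩ f).Nonempty) ∧ ∀ f ∈ p, ∀ g ∈ p, f ≠ g → (f ∩ g).Nonempty).card

lemma exists_coloring_of_big_lists (E : Finset (Finset V)) :
    ∀ L : Finset V → Finset ℕ, (∀ e ∈ E, E.card ≤ (L e).card) →
      ∃ γ : Finset V → ℕ, IsProperListColoring E L γ := by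
  induction E using Finset.strongInduction with
  | _ E ih =>
    intro L hL
    rcases E.eq_empty_or_nonempty with rfl | ⟨e, he⟩
    · exact ⟨fun _ => 0, by simp [IsProperListColoring]⟩
    · obtain ⟨γ, hγ1, hγ2⟩ := ih (E.erase e) (Finset.erase_ssubset he) L
        (fun f hf => le_trans (Finset.card_le_card (Finset.erase_subset _ _))
          (hL f (Finset.mem_of_mem_erase hf)))
      have hF : ((E.erase e).image γ).card < (L e).card := by
        have h1 : ((E.erase e).image γ).card ≤ (E.erase e).card := Finset.card_image_le
        have h2 : (E.erase e).card = E.card - 1 := Finset.card_erase_of_mem he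
        have h3 : E.card ≤ (L e).card := hL e he
        have h4 : 0 < E.card := Finset.card_pos.mpr ⟨e, he⟩
        omega
      have hne : (L e \ (E.erase e).image γ).Nonempty := by
        rw [← Finset.card_pos]
        have := Finset.le_card_sdiff ((E.erase e).image γ) (L e)
        omega
      obtain ⟨c, hc⟩ := hne
      rw [Finset.mem_sdiff] at hc
      refine ⟨fun f => if f = e then c else γ f, ?_, ?_⟩
      · intro f hf
        by_cases h : f = e
        · simp [h, hc.1]
        · simpa [h] using hγ1 f (Finset.mem_erase.mpr ⟨h, hf⟩)
      · intro f hf g hg hfg heq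
        by_cases h1 : f = e <;> by_cases h2 : g = e
        · exact absurd (h1.trans h2.symm) hfg
        · exfalso
          simp only [if_pos h1, if_neg h2] at heq
          exact hc.2 (Finset.mem_image.mpr ⟨g, Finset.mem_erase.mpr ⟨h2, hg⟩, heq.symm⟩)
        · exfalso
          simp only [if_neg h1, if_pos h2] at heq
          exact hc.2 (Finset.mem_image.mpr ⟨f, Finset.mem_erase.mpr ⟨h1, hf⟩, heq⟩)
        · simp only [if_neg h1, if_neg h2] at heq
          exact hγ2 f (Finset.mem_erase.mpr ⟨h1, hf⟩) g (Finset.mem_erase.mpr ⟨h2, hg⟩) hfg heq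

lemma listColorable_mono {E : Finset (Finset V)} {k k' : ℕ} (h : ListColorable E k)
    (hk : k ≤ k') : ListColorable E k' := by
  intro L hL
  have hch : ∀ f : Finset V, ∃ t : Finset ℕ, f ∈ E → t ⊆ L f ∧ t.card = k := by
    intro f
    by_cases hf : f ∈ E
    · obtain ⟨t, ht1, ht2⟩ := Finset.exists_subset_card_eq (by rw [hL f hf]; exact hk : k ≤ (L f).card)
      exact ⟨t, fun _ => ⟨ht1, ht2⟩⟩
    · exact ⟨∅, fun h => absurd h hf⟩
  choose L2 hL2 using hch
  obtain ⟨γ, hγ1, hγ2⟩ := h L2 (fun f hf => (hL2 f hf).2)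
  exact ⟨γ, fun f hf => (hL2 f hf).1 (hγ1 f hf), hγ2⟩

lemma listColorable_of_qList_le {E : Finset (Finset V)} {k : ℕ} (h : qList E ≤ k) :
    ListColorable E k := by
  have hne : {n | ListColorable E n}.Nonempty :=
    ⟨E.card, fun L hL => exists_coloring_of_big_lists E L (fun e he => (hL e he).ge)⟩
  exact listColorable_mono (Nat.sInf_mem hne) h

/-- If `H` is a linear hypergraph with no rank-1 edges such that
`q_list(H) > D(H) + 1` while `q_list(H \ {e}) ≤ D(H) + 1` for every edge `e`, then
every edge satisfies `R(e) ≥ D(H)`. -/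
theorem stmt17 {V : Type*} [DecidableEq V] [Fintype V] (E : Finset (Finset V))
    (hlin : Linear E) (h2 : ∀ e ∈ E, 2 ≤ e.card)
    (hq : Finset.univ.sup (cliqueDeg E) + 1 < qList E)
    (hdel : ∀ e ∈ E, qList (E.erase e) ≤ Finset.univ.sup (cliqueDeg E) + 1) :
    ∀ e ∈ E, Finset.univ.sup (cliqueDeg E) ≤ cliqueRank E e := by
  intro e he
  by_contra hR
  push_neg at hR
  set D := Finset.univ.sup (cliqueDeg E) with hD
  have hcol : ListColorable E (D + 1) := by
    intro L hL
    have h1 : ListColorable (E.erase e) (D + 1) := listColorable_of_qList_le (hdel e he)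
    obtain ⟨γ, hγ1, hγ2⟩ := h1 L (fun f hf => hL f (Finset.mem_of_mem_erase hf))
    set N := (E.erase e).filter (fun f => ¬ Disjoint e f) with hN
    have hNcard : N.card ≤ cliqueRank E e := by
      have hsub : N ⊆ e.biUnion (fun x => N.filter (fun f => x ∈ f)) := by
        intro f hf
        have hf' := hf
        rw [hN, Finset.mem_filter] at hf'
        obtain ⟨x, hx1, hx2⟩ := Finset.not_disjoint_iff.mp hf'.2
        exact Finset.mem_biUnion.mpr ⟨x, hx1, Finset.mem_filter.mpr ⟨hf, hx2⟩⟩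
      calc N.card ≤ (e.biUnion (fun x => N.filter (fun f => x ∈ f))).card :=
            Finset.card_le_card hsub
        _ ≤ ∑ x ∈ e, (N.filter (fun f => x ∈ f)).card := Finset.card_biUnion_le
        _ ≤ ∑ x ∈ e, (deg E x - 1) := by
            refine Finset.sum_le_sum (fun x hx => ?_)
            have hsub2 : N.filter (fun f => x ∈ f) ⊆ (E.filter (fun f => x ∈ f)).erase e := by
              intro f hf
              rw [Finset.mem_filter, hN, Finset.mem_filter, Finset.mem_erase] at hf
              exact Finset.mem_erase.mpr ⟨hf.1.1.1,
                Finset.mem_filter.mpr ⟨hf.1.1.2, hf.2⟩⟩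
            have := Finset.card_le_card hsub2
            rw [Finset.card_erase_of_mem (Finset.mem_filter.mpr ⟨he, hx⟩)] at this
            exact this
        _ = cliqueRank E e := rfl
    have hF : (N.image γ).card < (L e).card := by
      have := Finset.card_image_le (s := N) (f := γ)
      rw [hL e he]
      omega
    have hne : (L e \ N.image γ).Nonempty := by
      rw [← Finset.card_pos]
      have := Finset.le_card_sdiff (N.image γ) (L e)
      omega
    obtain ⟨c, hc⟩ := hne
    rw [Finset.mem_sdiff] at hc
    refine ⟨fun f => if f = e then c else γ f, ?_, ?_⟩
    · intro f hf
      by_cases h : f = e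
      · simp [h, hc.1]
      · simpa [h] using hγ1 f (Finset.mem_erase.mpr ⟨h, hf⟩)
    · intro f hf g hg hfg heq
      have key : ∀ f' ∈ E, f' ≠ e → c = γ f' → Disjoint e f' := by
        intro f' hf' hfe hcγ
        by_contra hdis
        exact hc.2 (Finset.mem_image.mpr ⟨f', Finset.mem_filter.mpr
          ⟨Finset.mem_erase.mpr ⟨hfe, hf'⟩, hdis⟩, hcγ.symm⟩)
      by_cases h1 : f = e <;> by_cases h2 : g = e
      · exact absurd (h1.trans h2.symm) hfg
      · simp only [if_pos h1, if_neg h2] at heq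
        subst h1
        exact key g hg h2 heq
      · simp only [if_neg h1, if_pos h2] at heq
        subst h2
        exact (key f hf h1 heq.symm).symm
      · simp only [if_neg h1, if_neg h2] at heq
        exact hγ2 f (Finset.mem_erase.mpr ⟨h1, hf⟩) g (Finset.mem_erase.mpr ⟨h2, hg⟩) hfg heq
  have : qList E ≤ D + 1 := Nat.sInf_le hcol
  omega
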